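/- The number of fixed points of the bit-reversal permutation π_n on [2^n] is 2^⌈n/2⌉, and the excedance number (number of j with π_n(j)>j) is (2^n − 2^⌈n/2⌉)/2. Consequently, −∑_{j=0}^{k−1} ⌊(j−π_n(j))/k⌋ = (k − 2^⌈n/2⌉)/2 where k=2^n. -/

import Mathlib

/-- The bit-reversal permutation on `n` bits: reverses the binary digits of `j`. -/

def bitrev (n j : ℕ) : ℕ := ∑ i ∈ Finset.range n, (j / 2 ^ i % 2) * 2 ^ (n - 1 - i)

lemma bitrev_succ (n j : ℕ) : bitrev (n+1) j = (j % 2) * 2 ^ n + bitrev n (j / 2) := by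
  unfold bitrev
  rw [Finset.sum_range_succ']
  simp only [pow_zero, Nat.div_one]
  rw [add_comm]
  congr 1
  apply Finset.sum_congr rfl
  intro i hi
  have h1 : j / 2 ^ (i+1) = j / 2 / 2 ^ i := by
    rw [Nat.div_div_eq_div_mul, ← pow_succ']
  rw [h1]
  congr 2
  omega

lemma bitrev_lt (n j : ℕ) : bitrev n j < 2 ^ n := by
  induction n generalizing j with
  | zero => simp [bitrev]
  | succ m ih =>
    rw [bitrev_succ]
    have := ih (j / 2)
    have : j % 2 ≤ 1 := by omega
    have : (j % 2) * 2 ^ m ≤ 2 ^ m := by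
      calc (j % 2) * 2 ^ m ≤ 1 * 2 ^ m := by gcongr
      _ = 2 ^ m := one_mul _
    have h2 : (2:ℕ) ^ (m+1) = 2 ^ m + 2 ^ m := by ring
    omega

lemma bitrev_succ' (n j : ℕ) : bitrev (n+1) j = 2 * bitrev n (j % 2 ^ n) + j / 2 ^ n % 2 := by
  unfold bitrev
  rw [Finset.sum_range_succ]
  congr 1
  · rw [Finset.mul_sum]
    apply Finset.sum_congr rfl
    intro i hi
    rw [Finset.mem_range] at hi
    have h1 : j % 2 ^ n / 2 ^ i % 2 = j / 2 ^ i % 2 := by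
      have : (2:ℕ) ^ n = 2 ^ i * 2 ^ (n - i) := by
        rw [← pow_add]; congr 1; omega
      rw [this, Nat.mod_mul_right_div_self]
      rw [Nat.mod_mod_of_dvd]
      exact dvd_pow_self 2 (by omega)
    rw [h1]
    have h2 : n + 1 - 1 - i = (n - 1 - i) + 1 := by omega
    rw [h2, pow_succ]
    ring
  · simp

lemma bitrev_key (n a m b : ℕ) (ha : a < 2) (hm : m < 2 ^ n) (hb : b < 2) :
    bitrev (n+2) (a + 2 * m + 2 * 2 ^ n * b) = b + 2 * bitrev n m + 2 * 2 ^ n * a := by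
  set j := a + 2 * m + 2 * 2 ^ n * b with hj
  have h2 : j % 2 = a := by
    have : j = a + 2 * (m + 2 ^ n * b) := by rw [hj]; ring
    rw [this, Nat.add_mul_mod_self_left, Nat.mod_eq_of_lt ha]
  have h3 : j / 2 = m + 2 ^ n * b := by
    have : j = a + 2 * (m + 2 ^ n * b) := by rw [hj]; ring
    rw [this, Nat.add_mul_div_left _ _ (by norm_num), Nat.div_eq_of_lt ha, zero_add]
  rw [bitrev_succ, h2, h3, bitrev_succ']
  have h4 : (m + 2 ^ n * b) % 2 ^ n = m := by
    rw [Nat.add_mul_mod_self_left, Nat.mod_eq_of_lt hm]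
  have h5 : (m + 2 ^ n * b) / 2 ^ n = b := by
    rw [Nat.add_mul_div_left _ _ (Nat.pos_of_ne_zero (by positivity)), Nat.div_eq_of_lt hm, zero_add]
  rw [h4, h5, Nat.mod_eq_of_lt hb]
  have : (2:ℕ) ^ (n+1) = 2 * 2 ^ n := by ring
  rw [this]
  ring

lemma sum_decomp {M : Type*} [AddCommMonoid M] (N : ℕ) (hN : 0 < N) (f : ℕ → M) :
    ∑ j ∈ Finset.range (4 * N), f j
      = ∑ p ∈ (Finset.range 2 ×ˢ Finset.range N ×ˢ Finset.range 2),
          f (p.1 + 2 * p.2.1 + 2 * N * p.2.2) := by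
  apply Finset.sum_nbij' (i := fun j => (j % 2, (j / 2 % N, j / 2 / N)))
      (j := fun p => p.1 + 2 * p.2.1 + 2 * N * p.2.2)
  · intro j hj
    rw [Finset.mem_range] at hj
    simp only [Finset.mem_product, Finset.mem_range]
    refine ⟨Nat.mod_lt _ (by norm_num), Nat.mod_lt _ hN, ?_⟩
    rw [Nat.div_lt_iff_lt_mul hN]
    omega
  · intro p hp
    simp only [Finset.mem_product, Finset.mem_range] at hp
    obtain ⟨ha, hm, hb⟩ := hp
    rw [Finset.mem_range]
    interval_cases h : p.2.2 <;> interval_cases h2 : p.1 <;> omega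
  · intro j hj
    have h1 : j / 2 % N + N * (j / 2 / N) = j / 2 := Nat.mod_add_div _ _
    have h2 : j % 2 + 2 * (j / 2) = j := Nat.mod_add_div _ _
    simp only
    calc j % 2 + 2 * (j / 2 % N) + 2 * N * (j / 2 / N)
        = j % 2 + 2 * (j / 2 % N + N * (j / 2 / N)) := by ring
      _ = j := by rw [h1, h2]
  · intro p hp
    simp only [Finset.mem_product, Finset.mem_range] at hp
    obtain ⟨ha, hm, hb⟩ := hp
    have e : p.1 + 2 * p.2.1 + 2 * N * p.2.2 = p.1 + 2 * (p.2.1 + N * p.2.2) := by ring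
    have h2 : (p.1 + 2 * p.2.1 + 2 * N * p.2.2) % 2 = p.1 := by
      rw [e, Nat.add_mul_mod_self_left, Nat.mod_eq_of_lt ha]
    have h3 : (p.1 + 2 * p.2.1 + 2 * N * p.2.2) / 2 = p.2.1 + N * p.2.2 := by
      rw [e, Nat.add_mul_div_left _ _ (by norm_num), Nat.div_eq_of_lt ha, zero_add]
    rw [h2, h3, Nat.add_mul_mod_self_left, Nat.mod_eq_of_lt hm,
      Nat.add_mul_div_left _ _ hN, Nat.div_eq_of_lt hm, zero_add]
  · intro j hj
    simp only
    have h1 : j / 2 % N + N * (j / 2 / N) = j / 2 := Nat.mod_add_div _ _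
    have h2 : j % 2 + 2 * (j / 2) = j := Nat.mod_add_div _ _
    have h3 : j % 2 + 2 * (j / 2 % N) + 2 * N * (j / 2 / N) = j := by
      calc j % 2 + 2 * (j / 2 % N) + 2 * N * (j / 2 / N)
          = j % 2 + 2 * (j / 2 % N + N * (j / 2 / N)) := by ring
        _ = j := by rw [h1, h2]
    rw [h3]

lemma card_fixed_step (n : ℕ) :
    (Finset.filter (fun j => bitrev (n+2) j = j) (Finset.range (2^(n+2)))).card
      = 2 * (Finset.filter (fun j => bitrev n j = j) (Finset.range (2^n))).card := by
  have hN : 0 < 2 ^ n := Nat.pow_pos (n := n) (by norm_num)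
  have h4 : (2:ℕ)^(n+2) = 4 * 2^n := by ring
  rw [Finset.card_filter, h4, sum_decomp _ hN]
  have key : ∀ p ∈ (Finset.range 2 ×ˢ Finset.range (2^n) ×ˢ Finset.range 2),
      (if bitrev (n+2) (p.1 + 2 * p.2.1 + 2 * 2^n * p.2.2) = p.1 + 2 * p.2.1 + 2 * 2^n * p.2.2 then 1 else 0)
        = (if p.1 = p.2.2 ∧ bitrev n p.2.1 = p.2.1 then 1 else 0) := by
    intro p hp
    simp only [Finset.mem_product, Finset.mem_range] at hp
    obtain ⟨ha, hm, hb⟩ := hp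
    rw [bitrev_key n _ _ _ ha hm hb]
    have hB := bitrev_lt n p.2.1
    congr 1
    simp only [eq_iff_iff]
    constructor
    · intro h
      interval_cases h1 : p.1 <;> interval_cases h2 : p.2.2 <;> omega
    · rintro ⟨h1, h2⟩
      rw [← h1, h2]
  rw [Finset.sum_congr rfl key]
  simp only [Finset.sum_product, Finset.sum_range_succ, Finset.sum_range_zero]
  simp only [Finset.card_filter]
  simp
  omega

lemma card_exc_step (n : ℕ) :
    (Finset.filter (fun j => j < bitrev (n+2) j) (Finset.range (2^(n+2)))).card
      = 2^n + 2 * (Finset.filter (fun j => j < bitrev n j) (Finset.range (2^n))).card := by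
  have hN : 0 < 2 ^ n := Nat.pow_pos (n := n) (by norm_num)
  have h4 : (2:ℕ)^(n+2) = 4 * 2^n := by ring
  rw [Finset.card_filter, h4, sum_decomp _ hN]
  have key : ∀ p ∈ (Finset.range 2 ×ˢ Finset.range (2^n) ×ˢ Finset.range 2),
      (if p.1 + 2 * p.2.1 + 2 * 2^n * p.2.2 < bitrev (n+2) (p.1 + 2 * p.2.1 + 2 * 2^n * p.2.2) then (1:ℕ) else 0)
        = (if p.2.2 < p.1 ∨ (p.1 = p.2.2 ∧ p.2.1 < bitrev n p.2.1) then 1 else 0) := by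
    intro p hp
    simp only [Finset.mem_product, Finset.mem_range] at hp
    obtain ⟨ha, hm, hb⟩ := hp
    rw [bitrev_key n _ _ _ ha hm hb]
    have hB := bitrev_lt n p.2.1
    congr 1
    simp only [eq_iff_iff]
    constructor
    · intro h
      interval_cases h1 : p.1 <;> interval_cases h2 : p.2.2 <;> omega
    · intro h
      interval_cases h1 : p.1 <;> interval_cases h2 : p.2.2 <;> omega
  rw [Finset.sum_congr rfl key]
  simp only [Finset.sum_product, Finset.sum_range_succ, Finset.sum_range_zero]
  simp only [Finset.card_filter]
  simp [Finset.sum_add_distrib]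
  omega

def P (n : ℕ) : Prop :=
    (Finset.filter (fun j => bitrev n j = j) (Finset.range (2^n))).card = 2 ^ ((n + 1) / 2)
    ∧ (Finset.filter (fun j => j < bitrev n j) (Finset.range (2^n))).card
        = (2^n - 2 ^ ((n + 1) / 2)) / 2

lemma base0 : P 0 := by constructor <;> decide
lemma base1 : P 1 := by constructor <;> decide

lemma step (n : ℕ) (ih : P n) : P (n+2) := by
  obtain ⟨h1, h2⟩ := ih
  have hc : (n+3)/2 = (n+1)/2 + 1 := by omega
  have hcn : (n+1)/2 ≤ n := by omega
  have hle : (2:ℕ)^((n+1)/2) ≤ 2^n := Nat.pow_le_pow_right (by norm_num) hcn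
  have hdvd : 2 ∣ 2^n - 2^((n+1)/2) := by
    rcases Nat.eq_zero_or_pos n with h | h
    · subst h; simp
    · exact Nat.dvd_sub (dvd_pow_self 2 (by omega)) (dvd_pow_self 2 (by omega))
  constructor
  · rw [card_fixed_step, h1, show n + 2 + 1 = n + 3 from rfl, hc, pow_succ]
    ring
  · rw [card_exc_step, h2, show n + 2 + 1 = n + 3 from rfl, hc]
    have h4 : (2:ℕ)^(n+2) = 4 * 2^n := by ring
    have h5 : (2:ℕ)^((n+1)/2 + 1) = 2 * 2^((n+1)/2) := by ring
    rw [h4, h5]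
    omega

lemma FE (n : ℕ) : P n := by
  have H : ∀ m, P m ∧ P (m+1) := by
    intro m
    induction m with
    | zero => exact ⟨base0, base1⟩
    | succ k ih => exact ⟨ih.2, step k ih.1⟩
  exact (H n).1

theorem bitrev_fixed_points_excedances (n k : ℕ) (hk : k = 2 ^ n) :
    (Finset.filter (fun j => bitrev n j = j) (Finset.range k)).card = 2 ^ ((n + 1) / 2)
    ∧ (Finset.filter (fun j => j < bitrev n j) (Finset.range k)).card
        = (k - 2 ^ ((n + 1) / 2)) / 2
    ∧ -∑ j ∈ Finset.range k, Int.fdiv ((j : ℤ) - (bitrev n j : ℤ)) (k : ℤ)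
        = ((k : ℤ) - 2 ^ ((n + 1) / 2)) / 2 := by
  subst hk
  obtain ⟨h1, h2⟩ := FE n
  refine ⟨h1, h2, ?_⟩
  have hk0 : (0:ℤ) < ((2^n : ℕ) : ℤ) := by
    have : 0 < 2^n := Nat.pow_pos (n := n) (by norm_num)
    exact_mod_cast this
  have hsum : ∀ j ∈ Finset.range (2^n),
      Int.fdiv ((j : ℤ) - (bitrev n j : ℤ)) ((2^n : ℕ) : ℤ)
        = if j < bitrev n j then (-1 : ℤ) else 0 := by
    intro j hj
    rw [Finset.mem_range] at hj
    have hB := bitrev_lt n j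
    rw [Int.fdiv_eq_ediv_of_nonneg _ (le_of_lt hk0)]
    split_ifs with h
    · have he : ((j : ℤ) - (bitrev n j : ℤ) + 1 * ((2^n : ℕ) : ℤ)) / ((2^n : ℕ) : ℤ)
          = ((j : ℤ) - (bitrev n j : ℤ)) / ((2^n : ℕ) : ℤ) + 1 :=
        Int.add_mul_ediv_right _ _ (ne_of_gt hk0)
      have h0 : ((j : ℤ) - (bitrev n j : ℤ) + 1 * ((2^n : ℕ) : ℤ)) / ((2^n : ℕ) : ℤ) = 0 :=
        Int.ediv_eq_zero_of_lt (by omega) (by omega)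
      omega
    · exact Int.ediv_eq_zero_of_lt (by omega) (by omega)
  rw [Finset.sum_congr rfl hsum]
  have : ∑ j ∈ Finset.range (2^n), (if j < bitrev n j then (-1 : ℤ) else 0)
      = -((Finset.filter (fun j => j < bitrev n j) (Finset.range (2^n))).card : ℤ) := by
    rw [← Finset.sum_boole, ← Finset.sum_neg_distrib]
    apply Finset.sum_congr rfl
    intro j hj
    split_ifs <;> simp
  rw [this, neg_neg, h2]
  have hcn : (n+1)/2 ≤ n := by omega
  have hle : (2:ℕ)^((n+1)/2) ≤ 2^n := Nat.pow_le_pow_right (by norm_num) hcn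
  have hcast : ((2:ℤ)^((n+1)/2)) = ((2^((n+1)/2) : ℕ) : ℤ) := by push_cast; ring
  rw [hcast]
  omega
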